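/- arXiv:2512.25060 — 2 statements merged into one kernel-verified Lean document; each statement's English description precedes it below -/
import Mathlib

section
/- Suppose there exist two neurons i, j whose phase columns w_i = (cos φ_i, −sin φ_i) and w_j = (cos φ_j, −sin φ_j) are linearly independent in ℝ², i.e. sin(φ_i − φ_j) ≠ 0. Then the matrix X with entries X_{(a,b),i} = cos(θ_a + φ_i) + cos(θ_b + φ_i) has rank exactly 2. -/
open Real

theorem stmt6 (p m : ℕ) (hp : 3 ≤ p) (hm : 2 ≤ m) (φ : Fin m → ℝ)
    (h : ∃ i j : Fin m, Real.sin (φ i - φ j) ≠ 0) :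
    (Matrix.of fun (ab : Fin p × Fin p) (i : Fin m) =>
        Real.cos (2 * π * ab.1 / p + φ i) + Real.cos (2 * π * ab.2 / p + φ i)).rank = 2 := by
  obtain ⟨i, j, hij⟩ := h
  set X : Matrix (Fin p × Fin p) (Fin m) ℝ := Matrix.of fun ab i =>
      Real.cos (2 * π * ab.1 / p + φ i) + Real.cos (2 * π * ab.2 / p + φ i) with hXdef
  -- upper bound
  have hupper : X.rank ≤ 2 := by
    have hfac : X = (Matrix.of fun (ab : Fin p × Fin p) (k : Fin 2) =>
        ![Real.cos (2*π*ab.1/p) + Real.cos (2*π*ab.2/p),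
          Real.sin (2*π*ab.1/p) + Real.sin (2*π*ab.2/p)] k) *
        (Matrix.of fun (k : Fin 2) (i : Fin m) => ![Real.cos (φ i), -Real.sin (φ i)] k) := by
      ext ab i
      simp only [hXdef, Matrix.mul_apply, Fin.sum_univ_two, Matrix.of_apply,
        Matrix.cons_val_zero, Matrix.cons_val_one, Matrix.head_cons, Real.cos_add]
      ring
    calc X.rank ≤ (Matrix.of fun (ab : Fin p × Fin p) (k : Fin 2) =>
        ![Real.cos (2*π*ab.1/p) + Real.cos (2*π*ab.2/p),
          Real.sin (2*π*ab.1/p) + Real.sin (2*π*ab.2/p)] k).rank := by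
          rw [hfac]; exact Matrix.rank_mul_le_left _ _
      _ ≤ Fintype.card (Fin 2) := Matrix.rank_le_card_width _
      _ = 2 := by simp
  -- lower bound
  have h0 : (0 : ℕ) < p := by omega
  have h1 : (1 : ℕ) < p := by omega
  set a0 : Fin p := ⟨0, h0⟩
  set a1 : Fin p := ⟨1, h1⟩
  set r : Fin 2 → Fin p × Fin p := ![(a0, a0), (a1, a1)]
  set c : Fin 2 → Fin m := ![i, j]
  set P : Matrix (Fin 2) (Fin p × Fin p) ℝ :=
    Matrix.of fun k ab => if ab = r k then (1 : ℝ) else 0 with hP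
  set Q : Matrix (Fin m) (Fin 2) ℝ :=
    Matrix.of fun i' l => if i' = c l then (1 : ℝ) else 0 with hQ
  have hPXQ : ∀ k l, (P * X * Q) k l = X (r k) (c l) := by
    intro k l
    have h1 : (P * X) k = fun i' => X (r k) i' := by
      funext i'
      simp [Matrix.mul_apply, hP]
    rw [Matrix.mul_apply]
    simp only [h1]
    simp [hQ, Matrix.mul_apply]
  have hdet : (P * X * Q).det ≠ 0 := by
    rw [Matrix.det_fin_two, hPXQ 0 0, hPXQ 0 1, hPXQ 1 0, hPXQ 1 1]
    have hr0 : r 0 = (a0, a0) := rfl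
    have hr1 : r 1 = (a1, a1) := rfl
    have hc0 : c 0 = i := rfl
    have hc1 : c 1 = j := rfl
    rw [hr0, hr1, hc0, hc1]
    have ha0 : ((a0 : Fin p) : ℝ) = 0 := by simp [a0]
    have ha1 : ((a1 : Fin p) : ℝ) = 1 := by simp [a1]
    simp only [hXdef, Matrix.of_apply, ha0, ha1]
    have expand : ∀ x : ℝ,
        (Real.cos (2 * π * 0 / p + x) + Real.cos (2 * π * 0 / p + x)) = 2 * Real.cos x ∧
        (Real.cos (2 * π * 1 / p + x) + Real.cos (2 * π * 1 / p + x)) = 2 * Real.cos (2 * π / p + x) := by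
      intro x; constructor <;> · norm_num; try ring
    rw [(expand (φ i)).1, (expand (φ j)).1, (expand (φ i)).2, (expand (φ j)).2]
    have hident : 2 * Real.cos (φ i) * (2 * Real.cos (2 * π / p + φ j)) -
        2 * Real.cos (φ j) * (2 * Real.cos (2 * π / p + φ i)) =
        4 * Real.sin (2 * π / p) * Real.sin (φ i - φ j) := by
      rw [Real.cos_add, Real.cos_add, Real.sin_sub]
      ring
    rw [hident]
    have hpi : (0 : ℝ) < π := Real.pi_pos
    have hppos : (0 : ℝ) < p := by exact_mod_cast h0
    have hsin : Real.sin (2 * π / p) > 0 := by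
      apply Real.sin_pos_of_pos_of_lt_pi
      · positivity
      · rw [div_lt_iff₀ hppos]
        have h3 : (3 : ℝ) ≤ p := by exact_mod_cast hp
        nlinarith
    positivity
  have hlower : 2 ≤ X.rank := by
    have hunit : IsUnit (P * X * Q) := by
      rw [Matrix.isUnit_iff_isUnit_det]
      exact isUnit_iff_ne_zero.mpr hdet
    have hr2 : (P * X * Q).rank = 2 := by
      rw [Matrix.rank_of_isUnit _ hunit]; simp
    calc (2 : ℕ) = (P * X * Q).rank := hr2.symm
      _ ≤ (P * X).rank := Matrix.rank_mul_le_left _ _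
      _ ≤ X.rank := Matrix.rank_mul_le_right _ _
  omega
end

section
/- If for some pair of neurons i ≠ j the 4-vectors (cos φ_i^L, −sin φ_i^L, cos φ_i^R, −sin φ_i^R) and (cos φ_j^L, −sin φ_j^L, cos φ_j^R, −sin φ_j^R), together with two more neurons' vectors, span ℝ⁴ (i.e., the 4×m phase matrix W has rank 4), then the preactivation matrix X_{(a,b),i} = cos(θ_a + φ_i^L) + cos(θ_b + φ_i^R) has rank exactly 4, for p ≥ 3. -/
open Real

-- A has full column rank 4
lemma rankA (p : ℕ) (hp : 3 ≤ p) :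
    (Matrix.of fun (ab : Fin p × Fin p) (j : Fin 4) =>
      (![Real.cos (2 * π * ab.1 / p), Real.sin (2 * π * ab.1 / p),
         Real.cos (2 * π * ab.2 / p), Real.sin (2 * π * ab.2 / p)] : Fin 4 → ℝ) j).rank = 4 := by
  set A : Matrix (Fin p × Fin p) (Fin 4) ℝ := Matrix.of fun ab j =>
      (![Real.cos (2 * π * ab.1 / p), Real.sin (2 * π * ab.1 / p),
         Real.cos (2 * π * ab.2 / p), Real.sin (2 * π * ab.2 / p)] : Fin 4 → ℝ) j with hA
  have hinj : Function.Injective A.mulVecLin := by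
    rw [← LinearMap.ker_eq_bot, LinearMap.ker_eq_bot']
    intro v hv
    set θ : ℝ := 2 * π / p with hθ
    have hp0 : (0:ℝ) < p := by positivity
    have hθpos : 0 < θ := by positivity
    have hθlt : θ < π := by
      rw [hθ, div_lt_iff₀ hp0]
      have : (3:ℝ) ≤ p := by exact_mod_cast hp
      nlinarith [Real.pi_pos]
    have hs : 0 < Real.sin θ := Real.sin_pos_of_pos_of_lt_pi hθpos hθlt
    have hc : Real.cos θ < 1 := by
      nlinarith [Real.sin_sq_add_cos_sq θ, Real.neg_one_le_cos θ]
    have h1p : 1 < p := by omega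
    have h2p : 2 < p := by omega
    have key : ∀ a b : Fin p, v 0 * Real.cos (2 * π * a / p) + v 1 * Real.sin (2 * π * a / p)
        + v 2 * Real.cos (2 * π * b / p) + v 3 * Real.sin (2 * π * b / p) = 0 := by
      intro a b
      have := congrFun hv (a, b)
      simp only [Matrix.mulVecLin_apply, Matrix.mulVec, dotProduct, hA,
        Fin.sum_univ_four, Matrix.of_apply, Pi.zero_apply] at this
      simp [Matrix.cons_val_zero, Matrix.cons_val_one] at this
      linarith [this]
    have e00 := key ⟨0, by omega⟩ ⟨0, by omega⟩
    have e10 := key ⟨1, by omega⟩ ⟨0, by omega⟩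
    have e20 := key ⟨2, by omega⟩ ⟨0, by omega⟩
    have e01 := key ⟨0, by omega⟩ ⟨1, by omega⟩
    simp only [Fin.val_mk] at e00 e10 e20 e01
    push_cast at e00 e10 e20 e01
    rw [show 2 * π * 0 / p = 0 by ring] at e00 e10 e01 e20
    rw [show 2 * π * 1 / p = θ by rw [hθ]; ring] at e10 e01
    rw [show 2 * π * 2 / p = 2 * θ by rw [hθ]; ring] at e20
    rw [Real.cos_two_mul, Real.sin_two_mul] at e20
    simp [Real.cos_zero, Real.sin_zero] at e00 e10 e20 e01
    -- e00 : v0 + v2 = 0 ; e10 : v0 c + v1 s + v2 = 0 ; e20 : v0(2c²-1)+v1 2sc+v2=0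
    -- e01 : v0 + v2 c + v3 s = 0
    have hv0 : v 0 = 0 := by
      have d1 : v 0 * (Real.cos θ - 1) + v 1 * Real.sin θ = 0 := by linarith
      have d2 : v 0 * ((2 * Real.cos θ ^ 2 - 1) - 1) + v 1 * (2 * Real.sin θ * Real.cos θ) = 0 := by
        nlinarith [e20, e00]
      have : v 0 * (Real.cos θ - 1) = 0 := by nlinarith [d1, d2]
      have hne : Real.cos θ - 1 ≠ 0 := by linarith
      exact (mul_eq_zero.mp this).resolve_right hne
    have hv1 : v 1 = 0 := by
      have d1 : v 0 * (Real.cos θ - 1) + v 1 * Real.sin θ = 0 := by linarith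
      rw [hv0] at d1
      simp at d1
      rcases d1 with h | h
      · exact h
      · linarith
    have hv2 : v 2 = 0 := by linarith
    have hv3 : v 3 = 0 := by
      rw [hv0, hv2] at e01
      simp at e01
      rcases e01 with h | h
      · exact h
      · linarith
    funext j
    fin_cases j <;> simpa using (by assumption : _)
  rw [Matrix.rank, LinearMap.finrank_range_of_inj hinj]
  simp [Module.finrank_fin_fun]

theorem stmt18 (p m : ℕ) (hp : 3 ≤ p) (hm : 4 ≤ m) (φL φR : Fin m → ℝ)
    (hW : (Matrix.of fun (j : Fin 4) (i : Fin m) =>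
        (![Real.cos (φL i), -Real.sin (φL i),
           Real.cos (φR i), -Real.sin (φR i)] : Fin 4 → ℝ) j).rank = 4) :
    (Matrix.of fun (ab : Fin p × Fin p) (i : Fin m) =>
        Real.cos (2 * π * ab.1 / p + φL i) + Real.cos (2 * π * ab.2 / p + φR i)).rank = 4 := by
  set W : Matrix (Fin 4) (Fin m) ℝ := Matrix.of fun (j : Fin 4) (i : Fin m) =>
        (![Real.cos (φL i), -Real.sin (φL i),
           Real.cos (φR i), -Real.sin (φR i)] : Fin 4 → ℝ) j with hWdef
  set A : Matrix (Fin p × Fin p) (Fin 4) ℝ := Matrix.of fun ab j =>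
      (![Real.cos (2 * π * ab.1 / p), Real.sin (2 * π * ab.1 / p),
         Real.cos (2 * π * ab.2 / p), Real.sin (2 * π * ab.2 / p)] : Fin 4 → ℝ) j with hAdef
  have hX : (Matrix.of fun (ab : Fin p × Fin p) (i : Fin m) =>
        Real.cos (2 * π * ab.1 / p + φL i) + Real.cos (2 * π * ab.2 / p + φR i)) = A * W := by
    ext ab i
    simp only [Matrix.of_apply, Matrix.mul_apply, Fin.sum_univ_four, hAdef, hWdef,
      Matrix.of_apply]
    simp only [Matrix.cons_val_zero, Matrix.cons_val_one, Matrix.head_cons,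
      Matrix.cons_val_two, Matrix.tail_cons, Matrix.cons_val_three]
    rw [Real.cos_add, Real.cos_add]
    ring
  rw [hX]
  -- surjectivity of W.mulVecLin
  have hWsurj : Function.Surjective W.mulVecLin := by
    rw [← LinearMap.range_eq_top]
    apply Submodule.eq_top_of_finrank_eq
    rw [← Matrix.rank] at *
    rw [hW]
    simp [Module.finrank_fin_fun]
  rw [Matrix.rank, Matrix.mulVecLin_mul,
    LinearMap.range_comp_of_range_eq_top _ (LinearMap.range_eq_top.mpr hWsurj), ← Matrix.rank]
  exact rankA p hp
end
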